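/- Let γ : [0,ℓ] → ℝ^M be twice continuously differentiable with ‖γ'(t)‖ = 1 and ‖γ''(t)‖ ≤ K for all t ∈ [0,ℓ]. Let F : ℝ^M → ℝ^M be twice continuously differentiable with ‖DF(x)‖ ≤ b₁ and ‖D²F(x)‖ ≤ b₂ for all x, and set J(t) = ‖DF(γ(t)) γ'(t)‖. If J(t) ≥ j > 0 for all t ∈ [0,ℓ], then |ln J(s) − ln J(t)| ≤ ((b₂ + b₁·K)/j)·|s − t| for all s, t ∈ [0,ℓ]. -/

import Mathlib

lemma log_lip_aux {j a b : ℝ} (hj : 0 < j) (hb : j ≤ b) (hba : b ≤ a) :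
    Real.log a - Real.log b ≤ (a - b) / j := by
  have hb0 : 0 < b := lt_of_lt_of_le hj hb
  have ha0 : 0 < a := lt_of_lt_of_le hb0 hba
  have h1 : Real.log a - Real.log b = Real.log (a / b) := (Real.log_div ha0.ne' hb0.ne').symm
  rw [h1]
  have h2 : Real.log (a / b) ≤ a / b - 1 := Real.log_le_sub_one_of_pos (div_pos ha0 hb0)
  have h3 : a / b - 1 = (a - b) / b := by field_simp
  calc Real.log (a / b) ≤ (a - b) / b := by rw [← h3]; exact h2
    _ ≤ (a - b) / j := by
        apply div_le_div_of_nonneg_left (by linarith) hj hb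
        -- fallback handled below
  

lemma log_lip {j a b : ℝ} (hj : 0 < j) (ha : j ≤ a) (hb : j ≤ b) :
    |Real.log a - Real.log b| ≤ |a - b| / j := by
  rcases le_total b a with h | h
  · rw [abs_of_nonneg (sub_nonneg.2 (Real.log_le_log (lt_of_lt_of_le hj hb) h)),
      abs_of_nonneg (sub_nonneg.2 h)]
    exact log_lip_aux hj hb h
  · rw [abs_sub_comm, abs_sub_comm a b,
      abs_of_nonneg (sub_nonneg.2 (Real.log_le_log (lt_of_lt_of_le hj ha) h)),
      abs_of_nonneg (sub_nonneg.2 h)]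
    exact log_lip_aux hj ha h

theorem log_jacobian_distortion
    {M : ℕ} (ℓ K b₁ b₂ j : ℝ) (hℓ : 0 ≤ ℓ)
    (γ γ' γ'' : ℝ → EuclideanSpace ℝ (Fin M))
    (F : EuclideanSpace ℝ (Fin M) → EuclideanSpace ℝ (Fin M))
    (hγ : ∀ t ∈ Set.Icc 0 ℓ, HasDerivAt γ (γ' t) t)
    (hγ' : ∀ t ∈ Set.Icc 0 ℓ, HasDerivAt γ' (γ'' t) t)
    (hγ''cont : ContinuousOn γ'' (Set.Icc 0 ℓ))
    (hunit : ∀ t ∈ Set.Icc 0 ℓ, ‖γ' t‖ = 1)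
    (hK : ∀ t ∈ Set.Icc 0 ℓ, ‖γ'' t‖ ≤ K)
    (hF : ContDiff ℝ 2 F)
    (hb₁ : ∀ x, ‖fderiv ℝ F x‖ ≤ b₁)
    (hb₂ : ∀ x, ‖fderiv ℝ (fderiv ℝ F) x‖ ≤ b₂)
    (hj : 0 < j)
    (hJ : ∀ t ∈ Set.Icc 0 ℓ, j ≤ ‖fderiv ℝ F (γ t) (γ' t)‖) :
    ∀ s ∈ Set.Icc 0 ℓ, ∀ t ∈ Set.Icc 0 ℓ,
      |Real.log ‖fderiv ℝ F (γ s) (γ' s)‖ - Real.log ‖fderiv ℝ F (γ t) (γ' t)‖| ≤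
        ((b₂ + b₁ * K) / j) * |s - t| := by
  intro s hs t ht
  have hb₁0 : 0 ≤ b₁ := le_trans (norm_nonneg _) (hb₁ (γ 0))
  set g : ℝ → EuclideanSpace ℝ (Fin M) := fun u => fderiv ℝ F (γ u) (γ' u) with hg_def
  have hdF : ContDiff ℝ 1 (fderiv ℝ F) := hF.fderiv_right (by norm_num)
  have hg : ∀ u ∈ Set.Icc (0:ℝ) ℓ, HasDerivAt g
      (fderiv ℝ (fderiv ℝ F) (γ u) (γ' u) (γ' u) + fderiv ℝ F (γ u) (γ'' u)) u := by
    intro u hu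
    have h1 : HasFDerivAt (fderiv ℝ F) (fderiv ℝ (fderiv ℝ F) (γ u)) (γ u) :=
      (hdF.differentiable one_ne_zero (γ u)).hasFDerivAt
    have h2 : HasDerivAt (fun v => fderiv ℝ F (γ v))
        (fderiv ℝ (fderiv ℝ F) (γ u) (γ' u)) u := h1.comp_hasDerivAt u (hγ u hu)
    exact h2.clm_apply (hγ' u hu)
  have hbd : ∀ u ∈ Set.Icc (0:ℝ) ℓ,
      ‖fderiv ℝ (fderiv ℝ F) (γ u) (γ' u) (γ' u) + fderiv ℝ F (γ u) (γ'' u)‖ ≤ b₂ + b₁ * K := by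
    intro u hu
    have h1 : ‖fderiv ℝ (fderiv ℝ F) (γ u) (γ' u) (γ' u)‖ ≤ b₂ := by
      calc ‖fderiv ℝ (fderiv ℝ F) (γ u) (γ' u) (γ' u)‖
          ≤ ‖fderiv ℝ (fderiv ℝ F) (γ u) (γ' u)‖ * ‖γ' u‖ :=
            ContinuousLinearMap.le_opNorm _ _
        _ ≤ (‖fderiv ℝ (fderiv ℝ F) (γ u)‖ * ‖γ' u‖) * ‖γ' u‖ := by
            apply mul_le_mul_of_nonneg_right (ContinuousLinearMap.le_opNorm _ _) (norm_nonneg _)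
        _ = ‖fderiv ℝ (fderiv ℝ F) (γ u)‖ := by rw [hunit u hu]; ring
        _ ≤ b₂ := hb₂ _
    have h2 : ‖fderiv ℝ F (γ u) (γ'' u)‖ ≤ b₁ * K := by
      calc ‖fderiv ℝ F (γ u) (γ'' u)‖ ≤ ‖fderiv ℝ F (γ u)‖ * ‖γ'' u‖ :=
            ContinuousLinearMap.le_opNorm _ _
        _ ≤ b₁ * K :=
            mul_le_mul (hb₁ _) (hK u hu) (norm_nonneg _) hb₁0
    calc ‖_ + _‖ ≤ _ + _ := norm_add_le _ _
      _ ≤ b₂ + b₁ * K := add_le_add h1 h2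
  have hlip : ‖g s - g t‖ ≤ (b₂ + b₁ * K) * ‖s - t‖ := by
    apply Convex.norm_image_sub_le_of_norm_hasDerivWithin_le
      (fun u hu => (hg u hu).hasDerivWithinAt) hbd (convex_Icc 0 ℓ) ht hs
  have hJs := hJ s hs
  have hJt := hJ t ht
  calc |Real.log ‖g s‖ - Real.log ‖g t‖| ≤ |‖g s‖ - ‖g t‖| / j := log_lip hj hJs hJt
    _ ≤ ‖g s - g t‖ / j := by
        gcongr
        exact abs_norm_sub_norm_le _ _
    _ ≤ ((b₂ + b₁ * K) * ‖s - t‖) / j := by gcongr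
    _ = ((b₂ + b₁ * K) / j) * |s - t| := by rw [Real.norm_eq_abs]; ring
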